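/- Let a > -1 be real and n a nonnegative integer. Suppose y : ℝ → ℂ is twice differentiable and satisfies the Hermite equation y''(u) - 2u·y'(u) + 2n·y(u) = 0 for all u. Then the function Ψ(u) = |u|^{a/(2(a+1))}·exp(-u²/2)·y(u) satisfies, at every u ≠ 0, the equation Ψ''(u) - (a/((a+1)u))·Ψ'(u) + ( a(3a+2)/4 + (a+1)·c·u² - (a+1)²u⁴ )/((a+1)²u²)·Ψ(u) = 0, where c = (a+1)(2n+1). -/

import Mathlib

/-- The factorized ansatz `Ψ(u) = |u|^(a/(2(a+1)))·exp(-u²/2)·y(u)`. -/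
noncomputable def PsiAnsatz (a : ℝ) (y : ℝ → ℂ) (u : ℝ) : ℂ :=
  ((|u| ^ (a / (2 * (a + 1))) : ℝ) : ℂ) * Complex.exp (-(u : ℂ) ^ 2 / 2) * y u

/-- Derivative of `|t| ^ A` away from the origin. -/
lemma stmt7_abs_rpow_hasDerivAt (A x : ℝ) (hx : x ≠ 0) :
    HasDerivAt (fun t : ℝ => |t| ^ A) (A * |x| ^ A / x) x := by
  rcases hx.lt_or_gt with h | h
  · have h1 : HasDerivAt (fun t : ℝ => (-t) ^ A) (A * (-x) ^ (A - 1) * -1) x :=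
      (Real.hasStrictDerivAt_rpow_const (p := A) (Or.inl (neg_ne_zero.mpr hx))).hasDerivAt.comp x
        (hasDerivAt_neg x)
    have h2 : HasDerivAt (fun t : ℝ => |t| ^ A) (A * (-x) ^ (A - 1) * -1) x := by
      apply h1.congr_of_eventuallyEq
      filter_upwards [eventually_lt_nhds h] with t ht
      rw [abs_of_neg ht]
    convert h2 using 1
    rw [abs_of_neg h, Real.rpow_sub (by linarith) A 1, Real.rpow_one]
    field_simp
  · have h1 : HasDerivAt (fun t : ℝ => t ^ A) (A * x ^ (A - 1)) x :=
      (Real.hasStrictDerivAt_rpow_const (p := A) (Or.inl hx)).hasDerivAt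
    have h2 : HasDerivAt (fun t : ℝ => |t| ^ A) (A * x ^ (A - 1)) x := by
      apply h1.congr_of_eventuallyEq
      filter_upwards [eventually_gt_nhds h] with t ht
      rw [abs_of_pos ht]
    convert h2 using 1
    rw [abs_of_pos h, Real.rpow_sub h A 1, Real.rpow_one]
    field_simp

/-- Derivative of the real radial factor `r t = |t|^A · exp(-t²/2)`. -/
lemma hasDerivAt_radial (A x : ℝ) (hx : x ≠ 0) :
    HasDerivAt (fun t : ℝ => |t| ^ A * Real.exp (-(t ^ 2) / 2))
      ((A / x - x) * (|x| ^ A * Real.exp (-(x ^ 2) / 2))) x := by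
  have he : HasDerivAt (fun t : ℝ => Real.exp (-(t ^ 2) / 2))
      (Real.exp (-(x ^ 2) / 2) * -x) x := by
    have h0 : HasDerivAt (fun t : ℝ => -(t ^ 2) / 2) (-(((2:ℕ):ℝ) * x ^ (2-1)) / 2) x :=
      ((hasDerivAt_pow 2 x).neg).div_const 2
    have h0' : HasDerivAt (fun t : ℝ => -(t ^ 2) / 2) (-x) x := by
      convert h0 using 1
      push_cast
      ring
    exact h0'.exp
  have := (stmt7_abs_rpow_hasDerivAt A x hx).mul he
  exact this.congr_deriv (by ring)

set_option maxHeartbeats 1000000 in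
/-- if `y` solves the Hermite equation `y'' - 2u·y' + 2n·y = 0`, then
`Ψ(u) = |u|^(a/(2(a+1)))·exp(-u²/2)·y(u)` solves the dimensionless deformed oscillator
equation with `c = (a+1)(2n+1)` at every `u ≠ 0`. -/
theorem stmt7 (a : ℝ) (ha : -1 < a) (n : ℕ) (y : ℝ → ℂ)
    (hy : Differentiable ℝ y) (hy' : Differentiable ℝ (deriv y))
    (heq : ∀ u : ℝ,
      deriv (deriv y) u - 2 * (u : ℂ) * deriv y u + 2 * (n : ℂ) * y u = 0) :
    ∀ u : ℝ, u ≠ 0 →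
      deriv (deriv (PsiAnsatz a y)) u
        - ((a / ((a + 1) * u) : ℝ) : ℂ) * deriv (PsiAnsatz a y) u
        + (((a * (3 * a + 2) / 4
              + (a + 1) * ((a + 1) * (2 * (n : ℝ) + 1)) * u ^ 2
              - (a + 1) ^ 2 * u ^ 4)
            / ((a + 1) ^ 2 * u ^ 2) : ℝ) : ℂ) * PsiAnsatz a y u = 0 := by
  intro u hu
  have ha1 : a + 1 ≠ 0 := by linarith
  set A : ℝ := a / (2 * (a + 1)) with hA
  set r : ℝ → ℝ := fun t => |t| ^ A * Real.exp (-(t ^ 2) / 2) with hrdef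
  -- Ψ as (r : ℂ) * y
  have hPsi : PsiAnsatz a y = fun x => ((r x : ℝ) : ℂ) * y x := by
    funext x
    have hexp : Complex.exp (-(x : ℂ) ^ 2 / 2) = ((Real.exp (-(x ^ 2) / 2) : ℝ) : ℂ) := by
      rw [Complex.ofReal_exp]
      norm_num
    simp only [PsiAnsatz, hrdef, hexp, Complex.ofReal_mul, hA]
  -- first derivative of Ψ at any nonzero point
  set G : ℝ → ℂ := fun x =>
    (((A / x - x) * r x : ℝ) : ℂ) * y x + ((r x : ℝ) : ℂ) * deriv y x with hGdef
  have hrD : ∀ x : ℝ, x ≠ 0 → HasDerivAt r ((A / x - x) * r x) x := fun x hx =>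
    hasDerivAt_radial A x hx
  have hΨ' : ∀ x : ℝ, x ≠ 0 → HasDerivAt (PsiAnsatz a y) (G x) x := by
    intro x hx
    rw [hPsi]
    exact ((hrD x hx).ofReal_comp).mul (hy x).hasDerivAt
  have hder1 : deriv (PsiAnsatz a y) u = G u := (hΨ' u hu).deriv
  have hEv : deriv (PsiAnsatz a y) =ᶠ[nhds u] G := by
    filter_upwards [eventually_ne_nhds hu] with x hx
    exact (hΨ' x hx).deriv
  -- second derivative
  have hh : HasDerivAt (fun x : ℝ => A / x - x) (-(A / u ^ 2) - 1) u := by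
    have h1 : HasDerivAt (fun x : ℝ => A * x⁻¹ - x) (A * -(u ^ 2)⁻¹ - 1) u := by
      exact ((hasDerivAt_inv hu).const_mul A).sub (hasDerivAt_id' u)
    have h2 : -(A / u ^ 2) - 1 = A * -(u ^ 2)⁻¹ - 1 := by field_simp
    rw [h2]
    exact h1.congr_of_eventuallyEq
      (Filter.Eventually.of_forall fun t => by simp [div_eq_mul_inv])
  have hs : HasDerivAt (fun x : ℝ => (A / x - x) * r x)
      ((-(A / u ^ 2) - 1) * r u + (A / u - u) * ((A / u - u) * r u)) u :=
    hh.mul (hrD u hu)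
  have hG : HasDerivAt G
      ((((-(A / u ^ 2) - 1) * r u + (A / u - u) * ((A / u - u) * r u) : ℝ) : ℂ) * y u
        + (((A / u - u) * r u : ℝ) : ℂ) * deriv y u
        + ((((A / u - u) * r u : ℝ) : ℂ) * deriv y u
          + ((r u : ℝ) : ℂ) * deriv (deriv y) u)) u :=
    ((hs.ofReal_comp).mul (hy u).hasDerivAt).add
      (((hrD u hu).ofReal_comp).mul (hy' u).hasDerivAt)
  have hder2 : deriv (deriv (PsiAnsatz a y)) u = deriv G u := hEv.deriv_eq
  rw [hder2, hG.deriv, hder1]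
  simp only [hGdef, hPsi]
  have hc1 : 2 * (A / u - u) - a / ((a + 1) * u) = -(2 * u) := by
    rw [hA]
    field_simp
    ring
  have hc0 : (-(A / u ^ 2) - 1) + (A / u - u) ^ 2 - (a / ((a + 1) * u)) * (A / u - u)
      + (a * (3 * a + 2) / 4 + (a + 1) * ((a + 1) * (2 * (n : ℝ) + 1)) * u ^ 2
          - (a + 1) ^ 2 * u ^ 4) / ((a + 1) ^ 2 * u ^ 2)
      = 2 * (n : ℝ) := by
    rw [hA]
    field_simp
    ring
  have hc1C := congrArg (Complex.ofReal) hc1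
  have hc0C := congrArg (Complex.ofReal) hc0
  push_cast at hc1C hc0C ⊢
  linear_combination ((r u : ℝ) : ℂ) * heq u + ((r u : ℝ) : ℂ) * y u * hc0C
    + ((r u : ℝ) : ℂ) * deriv y u * hc1C
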